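/- Let m be an odd prime and R = Z_{2^m − 1}, G = ⟨2⟩ the subgroup of R^× generated by 2. Then every element of G+1 = {g+1 : g ∈ G} is invertible in Z_{2^m−1}, and consequently H = G ∪ (−G) is a subgroup of R^× of order 2m with every nonzero element of H−1 invertible. -/

import Mathlib

private lemma aux_two_pow_eq_one (p m : ℕ) (hdvd : p ∣ 2 ^ m - 1) :
    (2 : ZMod p) ^ m = 1 := by
  have h1 : (1 : ℕ) ≤ 2 ^ m := Nat.one_le_two_pow
  have h0 : ((2 ^ m - 1 : ℕ) : ZMod p) = 0 :=
    (ZMod.natCast_eq_zero_iff _ _).2 hdvd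
  rw [Nat.cast_sub h1] at h0
  push_cast at h0
  exact sub_eq_zero.mp h0

private lemma aux_ord (m p : ℕ) (hm : m.Prime) (hp : p.Prime) (hdvd : p ∣ 2 ^ m - 1) :
    orderOf (2 : ZMod p) = m := by
  haveI : Fact m.Prime := ⟨hm⟩
  refine orderOf_eq_prime (aux_two_pow_eq_one p m hdvd) ?_
  intro h
  have h1 : ((1 : ℕ) : ZMod p) = 0 := by
    push_cast; linear_combination h
  have : p ∣ 1 := (ZMod.natCast_eq_zero_iff _ _).1 h1
  exact hp.one_lt.ne' (Nat.dvd_one.mp this)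

private lemma aux_dvd_of_pow_eq_one (m p i : ℕ) (hm : m.Prime) (hp : p.Prime)
    (hdvd : p ∣ 2 ^ m - 1) (h : (2 : ZMod p) ^ i = 1) : m ∣ i := by
  have := orderOf_dvd_of_pow_eq_one h
  rwa [aux_ord m p hm hp hdvd] at this

private lemma aux_neg_one (m p i : ℕ) (hm : m.Prime) (hmo : Odd m) (hp : p.Prime)
    (hdvd : p ∣ 2 ^ m - 1) (h : (2 : ZMod p) ^ i = -1) : False := by
  have hm1 : (2 : ZMod p) ^ m = 1 := aux_two_pow_eq_one p m hdvd
  have h2 : (2 : ZMod p) ^ (2 * i) = 1 := by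
    rw [two_mul, pow_add, h]; ring
  have hdvd2 : m ∣ 2 * i := aux_dvd_of_pow_eq_one m p (2 * i) hm hp hdvd h2
  have hcop : Nat.Coprime m 2 := by
    rw [Nat.Prime.coprime_iff_not_dvd hm]
    intro hd
    have := (Nat.prime_dvd_prime_iff_eq hm Nat.prime_two).1 hd
    rw [this, Nat.odd_iff] at hmo
    omega
  have hmi : m ∣ i := hcop.dvd_of_dvd_mul_left hdvd2
  obtain ⟨k, rfl⟩ := hmi
  rw [pow_mul, hm1, one_pow] at h
  have h20 : ((2 : ℕ) : ZMod p) = 0 := by push_cast; linear_combination h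
  have hp2 : p ∣ 2 := (ZMod.natCast_eq_zero_iff _ _).1 h20
  have hpe : p = 2 := (Nat.prime_dvd_prime_iff_eq hp Nat.prime_two).1 hp2
  subst hpe
  have hodd : Odd (2 ^ m - 1) :=
    Nat.Even.sub_odd Nat.one_le_two_pow
      (Nat.even_pow.mpr ⟨even_two, hm.pos.ne'⟩) odd_one
  rw [Nat.odd_iff] at hodd
  omega
private lemma aux_coprime_add (m i : ℕ) (hm : m.Prime) (hmo : Odd m) :
    Nat.Coprime (2 ^ i + 1) (2 ^ m - 1) := by
  by_contra h
  obtain ⟨p, hp, hp1, hp2⟩ := Nat.Prime.not_coprime_iff_dvd.1 h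
  have h0 : ((2 ^ i + 1 : ℕ) : ZMod p) = 0 := (ZMod.natCast_eq_zero_iff _ _).2 hp1
  push_cast at h0
  have h1 : (2 : ZMod p) ^ i = -1 := by linear_combination h0
  exact aux_neg_one m p i hm hmo hp hp2 h1

private lemma aux_coprime_sub (m i : ℕ) (hm : m.Prime) (hmo : Odd m) (hi : ¬ m ∣ i) :
    Nat.Coprime (2 ^ i - 1) (2 ^ m - 1) := by
  by_contra h
  obtain ⟨p, hp, hp1, hp2⟩ := Nat.Prime.not_coprime_iff_dvd.1 h
  have h0 : ((2 ^ i - 1 : ℕ) : ZMod p) = 0 := (ZMod.natCast_eq_zero_iff _ _).2 hp1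
  rw [Nat.cast_sub Nat.one_le_two_pow] at h0
  push_cast at h0
  have h1 : (2 : ZMod p) ^ i = 1 := by linear_combination h0
  exact hi (aux_dvd_of_pow_eq_one m p i hm hp hp2 h1)

/-- For `m` an odd prime, in `Z_{2^m - 1}` every element of `⟨2⟩ + 1` is a unit,
and `H = ⟨2⟩ ∪ (-⟨2⟩)` is a subgroup of the unit group of order `2m` with every
nonzero element of `H - 1` a unit. -/
theorem powers_of_two_plus_one_mod_mersenne (m : ℕ) (hm : Nat.Prime m) (hodd : Odd m) :
    (∀ x ∈ Submonoid.powers (2 : ZMod (2 ^ m - 1)), IsUnit (x + 1)) ∧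
    ∃ H : Subgroup (ZMod (2 ^ m - 1))ˣ,
      (H : Set (ZMod (2 ^ m - 1))ˣ) =
        {u : (ZMod (2 ^ m - 1))ˣ |
          ((u : ZMod (2 ^ m - 1)) ∈ Submonoid.powers (2 : ZMod (2 ^ m - 1))) ∨
          (-(u : ZMod (2 ^ m - 1)) ∈ Submonoid.powers (2 : ZMod (2 ^ m - 1)))} ∧
      Nat.card H = 2 * m ∧
      ∀ h ∈ H, ((h : (ZMod (2 ^ m - 1))ˣ) : ZMod (2 ^ m - 1)) - 1 ≠ 0 →
        IsUnit (((h : (ZMod (2 ^ m - 1))ˣ) : ZMod (2 ^ m - 1)) - 1) := by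
  have hm3 : 3 ≤ m := by
    have h2 := hm.two_le
    rcases Nat.lt_or_ge m 3 with h | h
    · have hme : m = 2 := by omega
      subst hme
      rw [Nat.odd_iff] at hodd
      omega
    · exact h
  have hN : 7 ≤ 2 ^ m - 1 := by
    have : 2 ^ 3 ≤ 2 ^ m := Nat.pow_le_pow_right (by norm_num) hm3
    omega
  haveI : NeZero (2 ^ m - 1) := ⟨by omega⟩
  haveI : Fact (1 < 2 ^ m - 1) := ⟨by omega⟩
  have h2m : (2 : ZMod (2 ^ m - 1)) ^ m = 1 := aux_two_pow_eq_one _ m dvd_rfl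
  -- Part 1
  have part1 : ∀ x ∈ Submonoid.powers (2 : ZMod (2 ^ m - 1)), IsUnit (x + 1) := by
    rintro x ⟨i, rfl⟩
    have hcast : (2 : ZMod (2 ^ m - 1)) ^ i + 1 = ((2 ^ i + 1 : ℕ) : ZMod (2 ^ m - 1)) := by
      push_cast; ring
    rw [hcast, ZMod.isUnit_iff_coprime]
    exact aux_coprime_add m i hm hodd
  refine ⟨part1, ?_⟩
  -- inverse helper
  have hinv : ∀ i : ℕ, (2 : ZMod (2 ^ m - 1)) ^ i * (2 : ZMod (2 ^ m - 1)) ^ (i * (m - 1)) = 1 := by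
    intro i
    rw [← pow_add]
    have he : i + i * (m - 1) = m * i := by
      obtain ⟨k, rfl⟩ : ∃ k, m = k + 1 := ⟨m - 1, by omega⟩
      simp only [Nat.add_sub_cancel]
      ring
    rw [he, pow_mul, h2m, one_pow]
  have uniq : ∀ a b c : ZMod (2 ^ m - 1), a * b = 1 → a * c = 1 → b = c := by
    intro a b c h1 h2
    calc b = b * (a * c) := by rw [h2, mul_one]
      _ = (a * b) * c := by ring
      _ = c := by rw [h1, one_mul]
  refine ⟨⟨⟨⟨{u : (ZMod (2 ^ m - 1))ˣ |
          ((u : ZMod (2 ^ m - 1)) ∈ Submonoid.powers (2 : ZMod (2 ^ m - 1))) ∨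
          (-(u : ZMod (2 ^ m - 1)) ∈ Submonoid.powers (2 : ZMod (2 ^ m - 1)))}, ?_⟩,
        Or.inl (by simpa using one_mem (Submonoid.powers (2 : ZMod (2 ^ m - 1))))⟩,
        ?_⟩, rfl, ?_, ?_⟩
  · rintro a b (ha | ha) (hb | hb) <;> simp only [Set.mem_setOf_eq, Units.val_mul]
    · exact Or.inl (mul_mem ha hb)
    · refine Or.inr ?_
      have : -((a : ZMod (2 ^ m - 1)) * b) = (a : ZMod (2 ^ m - 1)) * (-(b : ZMod (2 ^ m - 1))) := by ring
      rw [this]; exact mul_mem ha hb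
    · refine Or.inr ?_
      have : -((a : ZMod (2 ^ m - 1)) * b) = (-(a : ZMod (2 ^ m - 1))) * (b : ZMod (2 ^ m - 1)) := by ring
      rw [this]; exact mul_mem ha hb
    · refine Or.inl ?_
      have : (a : ZMod (2 ^ m - 1)) * b = (-(a : ZMod (2 ^ m - 1))) * (-(b : ZMod (2 ^ m - 1))) := by ring
      rw [this]; exact mul_mem ha hb
  · rintro u (⟨i, hi⟩ | ⟨i, hi⟩) <;> simp only [Set.mem_setOf_eq]
    · refine Or.inl ⟨i * (m - 1), ?_⟩
      have h1 : (u : ZMod (2 ^ m - 1)) * (2 : ZMod (2 ^ m - 1)) ^ (i * (m - 1)) = 1 := by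
        rw [← hi]; exact hinv i
      have h2 : (u : ZMod (2 ^ m - 1)) * ((u⁻¹ : (ZMod (2 ^ m - 1))ˣ) : ZMod (2 ^ m - 1)) = 1 :=
        u.mul_inv
      exact uniq _ _ _ h1 h2
    · refine Or.inr ⟨i * (m - 1), ?_⟩
      have h1 : (-(u : ZMod (2 ^ m - 1))) * (2 : ZMod (2 ^ m - 1)) ^ (i * (m - 1)) = 1 := by
        rw [← hi]; exact hinv i
      have h2 : (-(u : ZMod (2 ^ m - 1))) * (-((u⁻¹ : (ZMod (2 ^ m - 1))ˣ) : ZMod (2 ^ m - 1))) = 1 := by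
        rw [neg_mul_neg]; exact u.mul_inv
      exact uniq _ _ _ h1 h2
  · -- cardinality
    have hmul1 : (2 : ZMod (2 ^ m - 1)) * 2 ^ (m - 1) = 1 := by
      have he : m - 1 + 1 = m := by omega
      calc (2 : ZMod (2 ^ m - 1)) * 2 ^ (m - 1) = 2 ^ (m - 1 + 1) := by ring
        _ = 1 := by rw [he, h2m]
    set u2 : (ZMod (2 ^ m - 1))ˣ := Units.mkOfMulEqOne 2 (2 ^ (m - 1)) hmul1 with hu2def
    have hu2 : (u2 : ZMod (2 ^ m - 1)) = 2 := rfl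
    have hu2pow : ∀ i : ℕ, ((u2 ^ i : (ZMod (2 ^ m - 1))ˣ) : ZMod (2 ^ m - 1)) = 2 ^ i := by
      intro i; rw [Units.val_pow_eq_pow_val, hu2]
    haveI : Fact m.Prime := ⟨hm⟩
    have hord : orderOf u2 = m := by
      refine orderOf_eq_prime ?_ ?_
      · ext
        rw [hu2pow, h2m, Units.val_one]
      · intro h
        have h21 : (2 : ZMod (2 ^ m - 1)) = 1 := by rw [← hu2, h, Units.val_one]
        have h10 : ((1 : ℕ) : ZMod (2 ^ m - 1)) = 0 := by push_cast; linear_combination h21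
        have hd := (ZMod.natCast_eq_zero_iff _ _).1 h10
        have := Nat.le_of_dvd one_pos hd
        omega
    set A : Set (ZMod (2 ^ m - 1))ˣ :=
      {u | (u : ZMod (2 ^ m - 1)) ∈ Submonoid.powers (2 : ZMod (2 ^ m - 1))} with hAdef
    set B : Set (ZMod (2 ^ m - 1))ˣ :=
      {u | -(u : ZMod (2 ^ m - 1)) ∈ Submonoid.powers (2 : ZMod (2 ^ m - 1))} with hBdef
    have hA : A = Set.range (fun i : Fin m => u2 ^ (i : ℕ)) := by
      ext u
      constructor
      · rintro ⟨e, he⟩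
        have he2 : (2 : ZMod (2 ^ m - 1)) ^ e = (u : ZMod (2 ^ m - 1)) := he
        refine ⟨⟨e % m, Nat.mod_lt _ hm.pos⟩, ?_⟩
        ext
        rw [hu2pow, ← he2]
        conv_rhs => rw [← Nat.div_add_mod e m]
        rw [pow_add, pow_mul, h2m, one_pow, one_mul]
      · rintro ⟨i, rfl⟩
        exact ⟨(i : ℕ), (hu2pow (i : ℕ)).symm⟩
    have hfinj : Function.Injective (fun i : Fin m => u2 ^ (i : ℕ)) := by
      intro i j hij
      have h1 := pow_eq_pow_iff_modEq.mp hij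
      rw [hord] at h1
      have hij2 : (i : ℕ) % m = (j : ℕ) % m := h1
      exact Fin.ext (by rwa [Nat.mod_eq_of_lt i.isLt, Nat.mod_eq_of_lt j.isLt] at hij2)
    have hAcard : A.ncard = m := by
      rw [hA, ← Nat.card_coe_set_eq,
        Nat.card_congr (Equiv.ofInjective _ hfinj).symm, Nat.card_eq_fintype_card,
        Fintype.card_fin]
    have hB : B = (fun u : (ZMod (2 ^ m - 1))ˣ => -u) '' A := by
      ext u
      simp only [Set.mem_image, hAdef, hBdef, Set.mem_setOf_eq]
      constructor
      · intro h
        exact ⟨-u, by simpa using h, by simp⟩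
      · rintro ⟨v, hv, rfl⟩
        simpa using hv
    have hBcard : B.ncard = m := by
      rw [hB, Set.ncard_image_of_injective _ neg_injective, hAcard]
    have hdisj : Disjoint A B := by
      rw [Set.disjoint_left]
      rintro u ⟨i, hi⟩ ⟨j, hj⟩
      have hi2 : (2 : ZMod (2 ^ m - 1)) ^ i = (u : ZMod (2 ^ m - 1)) := hi
      have hj2 : (2 : ZMod (2 ^ m - 1)) ^ j = -(u : ZMod (2 ^ m - 1)) := hj
      have hK : (2 : ZMod (2 ^ m - 1)) ^ (j + i * (m - 1)) = -1 := by
        rw [pow_add, hj2, ← hi2]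
        linear_combination -hinv i
      have h0' := part1 _ ⟨j + i * (m - 1), rfl⟩
      have h0 : IsUnit ((2 : ZMod (2 ^ m - 1)) ^ (j + i * (m - 1)) + 1) := h0'
      rw [hK, neg_add_cancel] at h0
      exact not_isUnit_zero h0
    have hUnion : (A ∪ B).ncard = 2 * m := by
      rw [Set.ncard_union_eq hdisj (Set.toFinite A) (Set.toFinite B), hAcard, hBcard]
      ring
    refine Eq.trans ?_ ((Nat.card_coe_set_eq (A ∪ B)).trans hUnion)
    exact Nat.card_congr (Equiv.subtypeEquivRight fun u => by
      constructor
      · rintro (h | h)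
        · exact Or.inl h
        · exact Or.inr h
      · rintro (h | h)
        · exact Or.inl h
        · exact Or.inr h)
  · -- H - 1 units
    rintro u hu hne
    rcases hu with hu | hu
    · obtain ⟨i, hi⟩ := hu
      have hi2 : (2 : ZMod (2 ^ m - 1)) ^ i = (u : ZMod (2 ^ m - 1)) := hi
      clear hi
      rename' hi2 => hi
      have hmi : ¬ m ∣ i := by
        rintro ⟨k, rfl⟩
        apply hne
        rw [← hi, pow_mul, h2m, one_pow, sub_self]
      have hcast : (u : ZMod (2 ^ m - 1)) - 1 = ((2 ^ i - 1 : ℕ) : ZMod (2 ^ m - 1)) := by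
        rw [Nat.cast_sub Nat.one_le_two_pow, ← hi]; push_cast; ring
      rw [hcast, ZMod.isUnit_iff_coprime]
      exact aux_coprime_sub m i hm hodd hmi
    · obtain ⟨i, hi⟩ := hu
      have hi2 : (2 : ZMod (2 ^ m - 1)) ^ i = -(u : ZMod (2 ^ m - 1)) := hi
      have hcast : (u : ZMod (2 ^ m - 1)) - 1 = -((2 : ZMod (2 ^ m - 1)) ^ i + 1) := by
        linear_combination hi2
      rw [hcast]
      exact (part1 _ ⟨i, rfl⟩).neg
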